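/- For a nonempty bounded subset A of a real Hilbert space H, there exists a unique Chebyshev center of A in H, i.e., a unique point c ∈ H such that sup_{x∈A} ‖x − c‖ = r_H(A). -/

import Mathlib

noncomputable def chebRadius {H : Type*} [NormedAddCommGroup H] (A : Set H) : ℝ :=
  ⨅ y : H, ⨆ x : A, ‖(x : H) - y‖

theorem stmt2 {H : Type*} [NormedAddCommGroup H] [InnerProductSpace ℝ H] [CompleteSpace H] (A : Set H)
    (hA : A.Nonempty) (hb : Bornology.IsBounded A) :
    ∃! c : H, (⨆ x : A, ‖(x : H) - c‖) = chebRadius A := by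
  obtain ⟨x₀, hx₀⟩ := hA
  haveI : Nonempty A := ⟨⟨x₀, hx₀⟩⟩
  obtain ⟨C, hC⟩ := hb.exists_norm_le
  set f : H → ℝ := fun y => ⨆ x : A, ‖(x : H) - y‖ with hfdef
  have hbdd : ∀ y : H, BddAbove (Set.range fun x : A => ‖(x : H) - y‖) := by
    intro y
    refine ⟨C + ‖y‖, ?_⟩
    rintro _ ⟨x, rfl⟩
    calc ‖(x : H) - y‖ ≤ ‖(x : H)‖ + ‖y‖ := norm_sub_le _ _
      _ ≤ C + ‖y‖ := by have := hC x x.2; linarith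
  have hle : ∀ (y : H) (x : A), ‖(x : H) - y‖ ≤ f y := fun y x => le_ciSup (hbdd y) x
  have hf_nonneg : ∀ y, 0 ≤ f y := fun y => le_trans (norm_nonneg _) (hle y ⟨x₀, hx₀⟩)
  have hrdef : chebRadius A = ⨅ y : H, f y := rfl
  set r := chebRadius A with hr
  have hbddb : BddBelow (Set.range f) := ⟨0, by rintro _ ⟨y, rfl⟩; exact hf_nonneg y⟩
  have hr_le : ∀ y, r ≤ f y := fun y => ciInf_le hbddb y
  have hr_nonneg : 0 ≤ r := le_ciInf hf_nonneg
  have hf_lip : ∀ y z : H, f y ≤ f z + ‖y - z‖ := by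
    intro y z
    refine ciSup_le fun x => ?_
    calc ‖(x : H) - y‖ = ‖((x : H) - z) + (z - y)‖ := by abel_nf
      _ ≤ ‖(x : H) - z‖ + ‖z - y‖ := norm_add_le _ _
      _ ≤ f z + ‖y - z‖ := by rw [norm_sub_rev z y]; exact add_le_add (hle z x) le_rfl
  have key : ∀ y z : H, r ^ 2 + ‖y - z‖ ^ 2 / 4 ≤ (f y ^ 2 + f z ^ 2) / 2 := by
    intro y z
    set m := (2 : ℝ)⁻¹ • (y + z) with hm
    have hpar : ∀ x : H, ‖x - m‖ ^ 2 =
        (2 * ‖x - y‖ ^ 2 + 2 * ‖x - z‖ ^ 2 - ‖y - z‖ ^ 2) / 4 := by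
      intro x
      have h1 : (x - y) + (x - z) = (2 : ℝ) • (x - m) := by
        rw [hm]; module
      have h2 : (x - y) - (x - z) = z - y := by abel
      have hp := parallelogram_law_with_norm ℝ (x - y) (x - z)
      rw [h1, h2, norm_smul] at hp
      have hrev : ‖y - z‖ = ‖z - y‖ := norm_sub_rev _ _
      simp only [Real.norm_ofNat] at hp
      rw [hrev]
      nlinarith [hp]
    set D := (f y ^ 2 + f z ^ 2) / 2 - ‖y - z‖ ^ 2 / 4 with hD
    have hxD : ∀ x : A, ‖(x : H) - m‖ ^ 2 ≤ D := by
      intro x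
      have h1 := hle y x
      have h2 := hle z x
      have h3 := hpar (x : H)
      have ha : ‖(x : H) - y‖ ^ 2 ≤ f y ^ 2 := by nlinarith [norm_nonneg ((x : H) - y)]
      have hb' : ‖(x : H) - z‖ ^ 2 ≤ f z ^ 2 := by nlinarith [norm_nonneg ((x : H) - z)]
      rw [hD]
      linarith
    have hD0 : 0 ≤ D := le_trans (sq_nonneg _) (hxD ⟨x₀, hx₀⟩)
    have hfm : f m ≤ Real.sqrt D := by
      refine ciSup_le fun x => ?_
      rw [show ‖(x : H) - m‖ = Real.sqrt (‖(x : H) - m‖ ^ 2) from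
        (Real.sqrt_sq (norm_nonneg _)).symm]
      exact Real.sqrt_le_sqrt (hxD x)
    have hrs : r ≤ Real.sqrt D := le_trans (hr_le m) hfm
    have hr2 : r ^ 2 ≤ D := by
      nlinarith [Real.sq_sqrt hD0, Real.sqrt_nonneg D]
    rw [hD] at hr2; linarith
  -- minimizing sequence
  have haux : ∀ n : ℕ, ∃ y : H, f y < r + 1 / (n + 1) := by
    intro n
    have hlt : (⨅ y : H, f y) < r + 1 / (n + 1 : ℝ) := by
      have h0 : (0 : ℝ) < 1 / (n + 1) := by positivity
      have heq : (⨅ y : H, f y) = r := rfl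
      linarith [heq.le]
    exact exists_lt_of_ciInf_lt hlt
  choose u hu using haux
  set b : ℕ → ℝ := fun N => Real.sqrt (4 * (r + 1 / (N + 1)) ^ 2 - 4 * r ^ 2) with hbdef
  have hcauchy : CauchySeq u := by
    refine cauchySeq_of_le_tendsto_0 b (fun n m N hn hm => ?_) ?_
    · have hmono : ∀ {k l : ℕ}, k ≤ l → (1 : ℝ) / (l + 1) ≤ 1 / (k + 1) := by
        intro k l hkl
        apply one_div_le_one_div_of_le (by positivity)
        have : (k : ℝ) ≤ l := Nat.cast_le.mpr hkl
        linarith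
      have han : f (u n) ≤ r + 1 / (N + 1 : ℝ) :=
        le_trans (hu n).le (by linarith [hmono hn])
      have ham : f (u m) ≤ r + 1 / (N + 1 : ℝ) :=
        le_trans (hu m).le (by linarith [hmono hm])
      have hk := key (u n) (u m)
      have hfn := hf_nonneg (u n)
      have hfm := hf_nonneg (u m)
      have hd2 : dist (u n) (u m) ^ 2 ≤ 4 * (r + 1 / (N + 1)) ^ 2 - 4 * r ^ 2 := by
        rw [dist_eq_norm]
        nlinarith
      rw [hbdef]
      calc dist (u n) (u m) = Real.sqrt (dist (u n) (u m) ^ 2) :=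
            (Real.sqrt_sq dist_nonneg).symm
        _ ≤ _ := Real.sqrt_le_sqrt hd2
    · have h1 : Filter.Tendsto (fun N : ℕ => (1 : ℝ) / (N + 1)) Filter.atTop (nhds 0) :=
        tendsto_one_div_add_atTop_nhds_zero_nat
      have h2 : Filter.Tendsto (fun N : ℕ => 4 * (r + 1 / (N + 1)) ^ 2 - 4 * r ^ 2)
          Filter.atTop (nhds 0) := by
        have := ((h1.const_add r).pow 2).const_mul (4 : ℝ) |>.sub_const (4 * r ^ 2)
        simpa using this
      have h3 := h2.sqrt
      simpa [hbdef] using h3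
  obtain ⟨c, hc⟩ := cauchySeq_tendsto_of_complete hcauchy
  have hfc : f c = r := by
    refine le_antisymm ?_ (hr_le c)
    refine le_of_forall_pos_le_add fun ε hε => ?_
    obtain ⟨N₁, hN₁⟩ := Metric.tendsto_atTop.mp hc (ε / 2) (by linarith)
    obtain ⟨N₂, hN₂⟩ := exists_nat_gt (2 / ε)
    set n := max N₁ N₂
    have hdn : dist (u n) c < ε / 2 := hN₁ n (le_max_left _ _)
    have hsmall : 1 / (n + 1 : ℝ) < ε / 2 := by
      have hN₂n : (N₂ : ℝ) ≤ n := by exact_mod_cast le_max_right N₁ N₂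
      have hpos : (0 : ℝ) < n + 1 := by positivity
      rw [div_lt_iff₀ hpos]
      have h2ε : 0 < ε / 2 := by linarith
      have : 2 / ε < (n : ℝ) + 1 := by linarith
      calc (1 : ℝ) = ε / 2 * (2 / ε) := by field_simp
        _ < ε / 2 * ((n : ℝ) + 1) := by
          exact mul_lt_mul_of_pos_left this h2ε
    have := hf_lip c (u n)
    have hfun := hu n
    rw [dist_comm, dist_eq_norm] at hdn
    linarith
  refine ⟨c, hfc, fun y hy => ?_⟩
  have hy' : f y = r := hy
  have hk := key y c
  rw [hy', hfc] at hk
  have : ‖y - c‖ ^ 2 ≤ 0 := by linarith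
  have h0 : ‖y - c‖ = 0 := by nlinarith [norm_nonneg (y - c)]
  rw [norm_sub_eq_zero_iff] at h0
  exact h0
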